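/- For any 0 < a ≤ b < ∞, the improper integral ∫_0^∞ si(a x)·si(b x) dx equals π/(2b), where si(x) = -∫_x^∞ (sin t)/t dt. -/

import Mathlib

open Real hiding sinc continuous_sinc sinc_neg abs_sinc_le_one
open Filter

open MeasureTheory Set Topology
open intervalIntegral hiding norm_integral_le_of_norm_le hasDerivAt_integral_of_dominated_loc_of_deriv_le


noncomputable def sinc (t : ℝ) : ℝ := if t = 0 then 1 else Real.sin t / t

lemma sinc_eq {t : ℝ} (ht : t ≠ 0) : sinc t = Real.sin t / t := if_neg ht

lemma mul_sinc (t : ℝ) : t * sinc t = Real.sin t := by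
  rcases eq_or_ne t 0 with rfl | ht
  · simp
  · rw [sinc_eq ht]; field_simp

lemma abs_sinc_le_one (t : ℝ) : |sinc t| ≤ 1 := by
  rcases eq_or_ne t 0 with rfl | ht
  · simp [sinc]
  · rw [sinc_eq ht, abs_div, div_le_one (abs_pos.2 ht)]
    exact Real.abs_sin_le_abs

lemma continuous_sinc : Continuous sinc := by
  rw [continuous_iff_continuousAt]
  intro x
  rcases eq_or_ne x 0 with rfl | hx
  · have : sinc = Function.update (fun t => Real.sin t / t) 0 1 := by
      funext t; rcases eq_or_ne t 0 with rfl | ht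
      · simp [sinc]
      · simp [sinc_eq ht, Function.update_of_ne ht]
    rw [this, continuousAt_update_same]
    have h := (Real.hasDerivAt_sin 0)
    rw [hasDerivAt_iff_tendsto_slope] at h
    simp only [Real.cos_zero] at h
    refine h.congr (fun t => ?_)
    simp [slope, Real.sin_zero, div_eq_inv_mul]
  · have : ContinuousAt (fun t => Real.sin t / t) x :=
      (Real.continuous_sin.continuousAt).div continuousAt_id hx
    refine this.congr ?_
    filter_upwards [isOpen_ne.mem_nhds hx] with t ht
    rw [sinc_eq ht]

noncomputable def Sfn (x : ℝ) : ℝ := ∫ t in (0:ℝ)..x, sinc t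

lemma hasDerivAt_Sfn (x : ℝ) : HasDerivAt Sfn (sinc x) x :=
  intervalIntegral.integral_hasDerivAt_right
    (continuous_sinc.intervalIntegrable _ _)
    (continuous_sinc.stronglyMeasurableAtFilter _ _)
    continuous_sinc.continuousAt

lemma continuous_Sfn : Continuous Sfn :=
  continuous_iff_continuousAt.2 fun x => (hasDerivAt_Sfn x).continuousAt

lemma Sfn_zero : Sfn 0 = 0 := by simp [Sfn]

lemma sinc_neg (t : ℝ) : sinc (-t) = sinc t := by
  rcases eq_or_ne t 0 with rfl | ht
  · simp
  · rw [sinc_eq (neg_ne_zero.2 ht), sinc_eq ht, Real.sin_neg, neg_div_neg_eq]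

lemma Sfn_neg (x : ℝ) : Sfn (-x) = -Sfn x := by
  have : (∫ t in (0:ℝ)..(-x), sinc (-t)) = ∫ t in (x:ℝ)..(0:ℝ), sinc t := by
    simpa using intervalIntegral.integral_comp_neg (a := (0:ℝ)) (b := -x) (fun t => sinc t)
  simp only [sinc_neg] at this
  rw [Sfn, this, Sfn, intervalIntegral.integral_symm]

lemma hasDerivAt_Sfn_comp (c x : ℝ) :
    HasDerivAt (fun y => Sfn (c * y)) (c * sinc (c * x)) x := by
  simpa [mul_comm, Function.comp_def] using (hasDerivAt_Sfn (c * x)).comp x ((hasDerivAt_id x).const_mul c)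

lemma cos_div_sq_contOn {x : ℝ} (hx : 0 < x) {s : Set ℝ} (hs : s ⊆ Ici x) :
    ContinuousOn (fun t : ℝ => Real.cos t / t ^ 2) s := by
  apply ContinuousOn.div Real.continuous_cos.continuousOn (continuous_pow 2).continuousOn
  intro t ht
  have : 0 < t := lt_of_lt_of_le hx (hs ht)
  positivity

lemma cos_div_sq_integrableOn {x : ℝ} (hx : 0 < x) :
    IntegrableOn (fun t : ℝ => Real.cos t / t ^ 2) (Ioi x) := by
  refine Integrable.mono' (g := fun t : ℝ => t ^ (-2 : ℝ))
    (integrableOn_Ioi_rpow_of_lt (by norm_num) hx)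
    ((cos_div_sq_contOn hx (Ioi_subset_Ici_self)).aestronglyMeasurable measurableSet_Ioi) ?_
  filter_upwards [ae_restrict_mem measurableSet_Ioi] with t ht
  have htpos : 0 < t := hx.trans ht
  have h2 : t ^ (-2 : ℝ) = (t ^ 2)⁻¹ := by
    rw [show ((-2:ℝ)) = -((2:ℕ):ℝ) by norm_num, Real.rpow_neg htpos.le, Real.rpow_natCast]
  rw [h2, norm_div, Real.norm_eq_abs, Real.norm_eq_abs, abs_of_pos (show (0:ℝ) < t ^ 2 by positivity), ← one_div]
  gcongr
  exact Real.abs_cos_le_one t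

lemma integral_rpow_neg_two {x : ℝ} (hx : 0 < x) :
    ∫ t in Ioi x, t ^ (-2 : ℝ) = 1 / x := by
  rw [integral_Ioi_rpow_of_lt (by norm_num) hx]
  norm_num [Real.rpow_neg_one]

lemma sinc_ibp {x L : ℝ} (hx : 0 < x) (hxL : x ≤ L) :
    ∫ t in x..L, sinc t =
      Real.cos x / x - Real.cos L / L - ∫ t in x..L, Real.cos t / t ^ 2 := by
  have hsub : uIcc x L ⊆ Ici x := by
    rw [uIcc_of_le hxL]; exact Icc_subset_Ici_self
  have hderiv : ∀ t ∈ uIcc x L,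
      HasDerivAt (fun t => -Real.cos t / t) (sinc t + Real.cos t / t ^ 2) t := by
    intro t ht
    have htpos : 0 < t := lt_of_lt_of_le hx (hsub ht)
    have h1 : HasDerivAt (fun t : ℝ => -Real.cos t * t⁻¹)
        (- -Real.sin t * t⁻¹ + -Real.cos t * -(t ^ 2)⁻¹) t :=
      ((Real.hasDerivAt_cos t).neg).mul (hasDerivAt_inv htpos.ne')
    simp only [div_eq_mul_inv]
    convert h1 using 1
    rw [sinc_eq htpos.ne']
    field_simp
  have hint : IntervalIntegrable (fun t => sinc t + Real.cos t / t ^ 2) volume x L := by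
    apply (continuous_sinc.intervalIntegrable _ _).add
    exact (cos_div_sq_contOn hx hsub).intervalIntegrable
  have := intervalIntegral.integral_eq_sub_of_hasDerivAt hderiv hint
  rw [intervalIntegral.integral_add (continuous_sinc.intervalIntegrable _ _)
      ((cos_div_sq_contOn hx hsub).intervalIntegrable)] at this
  have hLpos : 0 < L := lt_of_lt_of_le hx hxL
  rw [neg_div, neg_div] at this
  linarith [this]

lemma tendsto_cos_div : Tendsto (fun L : ℝ => Real.cos L / L) atTop (𝓝 0) := by
  apply squeeze_zero_norm' _ tendsto_inv_atTop_zero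
  filter_upwards [Filter.Ioi_mem_atTop (0:ℝ)] with L hL
  rw [norm_div, Real.norm_eq_abs, Real.norm_eq_abs, abs_of_pos (show (0:ℝ) < L from hL), ← one_div, div_le_iff₀ hL,
    div_mul_eq_mul_div, mul_comm, ← div_mul_eq_mul_div, div_self hL.ne', one_mul]
  exact Real.abs_cos_le_one L

lemma Sfn_sub (x L : ℝ) : Sfn L - Sfn x = ∫ t in x..L, sinc t := by
  rw [Sfn, Sfn, ← intervalIntegral.integral_add_adjacent_intervals
    (continuous_sinc.intervalIntegrable 0 x) (continuous_sinc.intervalIntegrable x L)]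
  ring

lemma tendsto_Sfn_aux {x : ℝ} (hx : 0 < x) :
    Tendsto Sfn atTop
      (𝓝 (Sfn x + Real.cos x / x - ∫ t in Ioi x, Real.cos t / t ^ 2)) := by
  have h1 : Tendsto (fun L => Sfn x + (Real.cos x / x - Real.cos L / L
      - ∫ t in x..L, Real.cos t / t ^ 2)) atTop
      (𝓝 (Sfn x + (Real.cos x / x - 0 - ∫ t in Ioi x, Real.cos t / t ^ 2))) := by
    apply Tendsto.const_add
    exact ((tendsto_const_nhds.sub tendsto_cos_div).sub
      (intervalIntegral_tendsto_integral_Ioi x (cos_div_sq_integrableOn hx) tendsto_id))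
  have h2 : Sfn x + (Real.cos x / x - 0
      - ∫ t in Ioi x, Real.cos t / t ^ 2)
      = Sfn x + Real.cos x / x - ∫ t in Ioi x, Real.cos t / t ^ 2 := by ring
  rw [← h2]
  apply h1.congr'
  filter_upwards [Filter.Ici_mem_atTop x] with L hL
  have h3 := Sfn_sub x L
  rw [sinc_ibp hx hL] at h3
  linarith

noncomputable def Dval : ℝ :=
  Sfn 1 + Real.cos 1 / 1 - ∫ t in Ioi (1:ℝ), Real.cos t / t ^ 2

lemma tendsto_Sfn : Tendsto Sfn atTop (𝓝 Dval) := tendsto_Sfn_aux one_pos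

lemma Dval_eq {x : ℝ} (hx : 0 < x) :
    Dval = Sfn x + Real.cos x / x - ∫ t in Ioi x, Real.cos t / t ^ 2 :=
  tendsto_nhds_unique tendsto_Sfn (tendsto_Sfn_aux hx)

lemma Sfn_tail_bound {x : ℝ} (hx : 0 < x) : |Sfn x - Dval| ≤ 2 / x := by
  rw [Dval_eq hx]
  have h1 : ‖∫ t in Ioi x, Real.cos t / t ^ 2‖ ≤ 1 / x := by
    rw [← integral_rpow_neg_two hx]
    apply norm_integral_le_of_norm_le (integrableOn_Ioi_rpow_of_lt (by norm_num) hx)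
    filter_upwards [ae_restrict_mem measurableSet_Ioi] with t ht
    have htpos : 0 < t := hx.trans ht
    have h2 : t ^ (-2 : ℝ) = (t ^ 2)⁻¹ := by
      rw [show ((-2:ℝ)) = -((2:ℕ):ℝ) by norm_num, Real.rpow_neg htpos.le, Real.rpow_natCast]
    rw [h2, norm_div, Real.norm_eq_abs, Real.norm_eq_abs,
      abs_of_pos (show (0:ℝ) < t ^ 2 by positivity), ← one_div]
    gcongr
    exact Real.abs_cos_le_one t
  have h2 : |Real.cos x / x| ≤ 1 / x := by
    rw [abs_div, abs_of_pos hx]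
    gcongr
    exact Real.abs_cos_le_one x
  rw [Real.norm_eq_abs] at h1
  have := abs_sub_abs_le_abs_sub (Real.cos x / x) (∫ t in Ioi x, Real.cos t / t ^ 2)
  have h4 : |Sfn x - (Sfn x + Real.cos x / x - ∫ t in Ioi x, Real.cos t / t ^ 2)|
      = |Real.cos x / x - ∫ t in Ioi x, Real.cos t / t ^ 2| := by
    rw [abs_sub_comm]; congr 1; ring
  rw [h4]
  calc |Real.cos x / x - ∫ t in Ioi x, Real.cos t / t ^ 2|
      ≤ |Real.cos x / x| + |∫ t in Ioi x, Real.cos t / t ^ 2| := abs_sub _ _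
    _ ≤ 1 / x + 1 / x := add_le_add h2 h1
    _ = 2 / x := by ring


lemma hasDerivAt_exp_neg_mul (s t : ℝ) :
    HasDerivAt (fun t => Real.exp (-s * t)) (-s * Real.exp (-s * t)) t := by
  have h := (Real.hasDerivAt_exp (-s * t)).comp t ((hasDerivAt_id t).const_mul (-s))
  have h2 : HasDerivAt (fun t : ℝ => Real.exp (-s * t)) (Real.exp (-s * t) * (-s * 1)) t := h
  convert h2 using 1
  ring

lemma tendsto_exp_neg_mul {s : ℝ} (hs : 0 < s) :
    Tendsto (fun t => Real.exp (-s * t)) atTop (𝓝 0) := by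
  have h := Real.tendsto_exp_neg_atTop_nhds_zero.comp
    (Tendsto.const_mul_atTop hs (tendsto_id (α := ℝ)))
  refine h.congr fun t => ?_
  simp [Function.comp, neg_mul]

lemma integral_exp_neg_mul {s : ℝ} (hs : 0 < s) :
    ∫ t in Ioi (0:ℝ), Real.exp (-s * t) = 1 / s := by
  have hderiv : ∀ t ∈ Ici (0:ℝ),
      HasDerivAt (fun t => -Real.exp (-s * t) / s) (Real.exp (-s * t)) t := by
    intro t _
    have h := ((hasDerivAt_exp_neg_mul s t).neg).div_const s
    refine h.congr_deriv (Eq.symm ?_)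
    rw [eq_div_iff hs.ne']; ring
  have hlim : Tendsto (fun t => -Real.exp (-s * t) / s) atTop (𝓝 0) := by
    have := ((tendsto_exp_neg_mul hs).neg).div_const s
    simpa using this
  have := integral_Ioi_of_hasDerivAt_of_tendsto' hderiv (exp_neg_integrableOn_Ioi 0 hs) hlim
  rw [this]
  rw [mul_zero, Real.exp_zero]
  field_simp
  ring

lemma laplace_sin {s : ℝ} (hs : 0 < s) :
    ∫ t in Ioi (0:ℝ), Real.exp (-s * t) * Real.sin t = 1 / (1 + s ^ 2) := by
  have hden : (1 : ℝ) + s ^ 2 ≠ 0 := by positivity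
  set f : ℝ → ℝ := fun t => -(Real.exp (-s * t) * (s * Real.sin t + Real.cos t)) / (1 + s ^ 2)
    with hf
  have hderiv : ∀ t ∈ Ici (0:ℝ), HasDerivAt f (Real.exp (-s * t) * Real.sin t) t := by
    intro t _
    have h1 : HasDerivAt (fun t => Real.exp (-s * t) * (s * Real.sin t + Real.cos t))
        (-s * Real.exp (-s * t) * (s * Real.sin t + Real.cos t)
          + Real.exp (-s * t) * (s * Real.cos t + -Real.sin t)) t :=
      (hasDerivAt_exp_neg_mul s t).mul
        (((Real.hasDerivAt_sin t).const_mul s).add (Real.hasDerivAt_cos t))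
    have h2 := (h1.neg).div_const (1 + s ^ 2)
    refine h2.congr_deriv (Eq.symm ?_)
    rw [eq_div_iff hden]
    ring
  have hlim : Tendsto f atTop (𝓝 0) := by
    rw [hf]
    have h3 : Tendsto (fun t => Real.exp (-s * t) * (s * Real.sin t + Real.cos t)) atTop (𝓝 0) := by
      apply squeeze_zero_norm (a := fun t => (s + 1) * Real.exp (-s * t))
      · intro t
        rw [norm_mul, Real.norm_eq_abs, Real.norm_eq_abs, Real.abs_exp, mul_comm]
        gcongr
        calc |s * Real.sin t + Real.cos t| ≤ |s * Real.sin t| + |Real.cos t| := abs_add_le _ _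
          _ ≤ s * 1 + 1 := by
              rw [abs_mul, abs_of_pos hs]
              exact add_le_add (by gcongr; exact Real.abs_sin_le_one t) (Real.abs_cos_le_one t)
          _ = s + 1 := by ring
      · simpa using (tendsto_exp_neg_mul hs).const_mul (s + 1)
    simpa using (h3.neg).div_const (1 + s ^ 2)
  have hint : IntegrableOn (fun t => Real.exp (-s * t) * Real.sin t) (Ioi (0:ℝ)) := by
    apply Integrable.mono' (exp_neg_integrableOn_Ioi 0 hs)
    · exact ((Real.continuous_exp.comp (continuous_const.mul continuous_id)).mul
        Real.continuous_sin).aestronglyMeasurable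
    · filter_upwards with t
      rw [norm_mul, Real.norm_eq_abs, Real.norm_eq_abs, Real.abs_exp]
      nth_rewrite 2 [← mul_one (Real.exp (-s * t))]
      gcongr
      exact Real.abs_sin_le_one t
  have := integral_Ioi_of_hasDerivAt_of_tendsto' hderiv hint hlim
  rw [this, hf]
  simp only [mul_zero, Real.exp_zero, Real.sin_zero, Real.cos_zero]
  field_simp
  ring

noncomputable def Lap (s : ℝ) : ℝ := ∫ t in Ioi (0:ℝ), Real.exp (-s * t) * sinc t

lemma integrableOn_exp_sinc {s : ℝ} (hs : 0 < s) :
    IntegrableOn (fun t => Real.exp (-s * t) * sinc t) (Ioi (0:ℝ)) := by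
  apply Integrable.mono' (exp_neg_integrableOn_Ioi 0 hs)
  · exact ((Real.continuous_exp.comp (continuous_const.mul continuous_id)).mul
      continuous_sinc).aestronglyMeasurable
  · filter_upwards with t
    rw [norm_mul, Real.norm_eq_abs, Real.norm_eq_abs, Real.abs_exp]
    nth_rewrite 2 [← mul_one (Real.exp (-s * t))]
    gcongr
    exact abs_sinc_le_one t

lemma integrableOn_exp_sin {s : ℝ} (hs : 0 < s) :
    IntegrableOn (fun t => Real.exp (-s * t) * Real.sin t) (Ioi (0:ℝ)) := by
  apply Integrable.mono' (exp_neg_integrableOn_Ioi 0 hs)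
  · exact ((Real.continuous_exp.comp (continuous_const.mul continuous_id)).mul
      Real.continuous_sin).aestronglyMeasurable
  · filter_upwards with t
    rw [norm_mul, Real.norm_eq_abs, Real.norm_eq_abs, Real.abs_exp]
    nth_rewrite 2 [← mul_one (Real.exp (-s * t))]
    gcongr
    exact Real.abs_sin_le_one t

lemma hasDerivAt_Lap {s : ℝ} (hs : 0 < s) :
    HasDerivAt Lap (-(1 / (1 + s ^ 2))) s := by
  have hε : 0 < s / 2 := by linarith
  have key := hasDerivAt_integral_of_dominated_loc_of_deriv_le
    (F := fun x t => Real.exp (-x * t) * sinc t)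
    (F' := fun x t => -(Real.exp (-x * t) * Real.sin t))
    (x₀ := s) (s := Metric.ball s (s / 2)) (μ := volume.restrict (Ioi (0:ℝ)))
    (bound := fun t => t * Real.exp (-(s / 2) * t)) (Metric.ball_mem_nhds s hε)
    ?_ (integrableOn_exp_sinc hs) ?_ ?_ ?_ ?_
  · rcases key with ⟨-, hd⟩
    have : (∫ t in Ioi (0:ℝ), -(Real.exp (-s * t) * Real.sin t)) = -(1 / (1 + s ^ 2)) := by
      rw [MeasureTheory.integral_neg, laplace_sin hs]
    rwa [this] at hd
  · filter_upwards with x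
    exact ((Real.continuous_exp.comp (continuous_const.mul continuous_id)).mul
      continuous_sinc).aestronglyMeasurable
  · exact (((Real.continuous_exp.comp (continuous_const.mul continuous_id)).mul
      Real.continuous_sin).neg).aestronglyMeasurable
  · filter_upwards [ae_restrict_mem measurableSet_Ioi] with t ht x hx
    have htpos : (0:ℝ) < t := ht
    rw [Metric.mem_ball, Real.dist_eq, abs_lt] at hx
    have hx2 : s / 2 < x := by linarith [hx.1]
    rw [norm_neg, norm_mul, Real.norm_eq_abs, Real.norm_eq_abs, Real.abs_exp, mul_comm]
    apply mul_le_mul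
    · calc |Real.sin t| ≤ |t| := Real.abs_sin_le_abs
        _ = t := abs_of_pos htpos
    · apply Real.exp_le_exp.2
      nlinarith
    · positivity
    · exact htpos.le
  · have h := integrableOn_rpow_mul_exp_neg_mul_rpow (by norm_num : (-1:ℝ) < 1) (by norm_num : (0:ℝ) < 1) hε
    simpa [Real.rpow_one, IntegrableOn] using h
  · filter_upwards with t x hx
    have h1 : HasDerivAt (fun x => Real.exp (-x * t) * sinc t)
        ((-t * Real.exp (-t * x)) * sinc t) x := by
      have h0 : (fun x => Real.exp (-x * t) * sinc t) = fun x => Real.exp (-t * x) * sinc t := by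
        funext y; ring_nf
      rw [h0]
      exact (hasDerivAt_exp_neg_mul t x).mul_const (sinc t)
    refine h1.congr_deriv (Eq.symm ?_)
    rw [show -t * x = -x * t by ring, ← mul_sinc t]
    ring

lemma lap_add_arctan_const {s₁ s₂ : ℝ} (h1 : 0 < s₁) (h12 : s₁ ≤ s₂) :
    Lap s₂ + Real.arctan s₂ = Lap s₁ + Real.arctan s₁ := by
  have hderiv : ∀ x ∈ uIcc s₁ s₂,
      HasDerivAt (fun s => Lap s + Real.arctan s) ((0:ℝ)) x := by
    intro x hx
    rw [uIcc_of_le h12] at hx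
    have hxpos : 0 < x := lt_of_lt_of_le h1 hx.1
    have := (hasDerivAt_Lap hxpos).add (Real.hasDerivAt_arctan x)
    refine this.congr_deriv (Eq.symm ?_)
    ring
  have hint : IntervalIntegrable (fun _ : ℝ => (0:ℝ)) volume s₁ s₂ :=
    intervalIntegrable_const
  have := intervalIntegral.integral_eq_sub_of_hasDerivAt hderiv hint
  simp only [intervalIntegral.integral_zero] at this
  linarith [this]

lemma tendsto_Lap_atTop : Tendsto Lap atTop (𝓝 0) := by
  apply squeeze_zero_norm' (a := fun s => 1 / s)
  · filter_upwards [Filter.Ioi_mem_atTop (0:ℝ)] with s hs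
    have hs' : (0:ℝ) < s := hs
    rw [← integral_exp_neg_mul hs']
    apply norm_integral_le_of_norm_le (exp_neg_integrableOn_Ioi 0 hs')
    filter_upwards with t
    rw [norm_mul, Real.norm_eq_abs, Real.norm_eq_abs, Real.abs_exp]
    nth_rewrite 2 [← mul_one (Real.exp (-s * t))]
    gcongr
    exact abs_sinc_le_one t
  · simpa [one_div] using tendsto_inv_atTop_zero

lemma lap_eq {s : ℝ} (hs : 0 < s) : Lap s = π / 2 - Real.arctan s := by
  have hG : Tendsto (fun x => Lap x + Real.arctan x) atTop (𝓝 (0 + π / 2)) :=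
    tendsto_Lap_atTop.add (Real.tendsto_arctan_atTop.mono_right nhdsWithin_le_nhds)
  have hconst : Tendsto (fun x => Lap x + Real.arctan x) atTop
      (𝓝 (Lap s + Real.arctan s)) := by
    apply tendsto_const_nhds.congr'
    filter_upwards [Filter.Ici_mem_atTop s] with x hx
    exact (lap_add_arctan_const hs hx).symm
  have := tendsto_nhds_unique hconst hG
  rw [zero_add] at this
  linarith

lemma tendsto_Lap_zero_pi : Tendsto Lap (𝓝[>] (0:ℝ)) (𝓝 (π / 2)) := by
  have h : Tendsto (fun s => π / 2 - Real.arctan s) (𝓝[>] (0:ℝ)) (𝓝 (π / 2 - Real.arctan 0)) := by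
    apply Tendsto.const_sub
    exact (Real.continuous_arctan.continuousAt.tendsto).mono_left nhdsWithin_le_nhds
  rw [Real.arctan_zero, sub_zero] at h
  apply h.congr'
  filter_upwards [self_mem_nhdsWithin] with s hs
  exact (lap_eq hs).symm

noncomputable def Rfn (t : ℝ) : ℝ := Dval - Sfn t

lemma hasDerivAt_Rfn (t : ℝ) : HasDerivAt Rfn (-(sinc t)) t :=
  (hasDerivAt_Sfn t).const_sub Dval

lemma continuous_Rfn : Continuous Rfn := continuous_const.sub continuous_Sfn

lemma Rfn_zero : Rfn 0 = Dval := by simp [Rfn, Sfn_zero]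

lemma tendsto_Rfn : Tendsto Rfn atTop (𝓝 0) := by
  have := tendsto_const_nhds (x := Dval) (f := atTop (α := ℝ)) |>.sub tendsto_Sfn
  exact (by simpa using this : Tendsto (fun x => Dval - Sfn x) atTop (𝓝 0))

lemma Rfn_bound : ∃ M : ℝ, 0 ≤ M ∧ ∀ t : ℝ, 0 ≤ t → |Rfn t| ≤ M := by
  obtain ⟨C, hC⟩ := (isCompact_Icc (a := (0:ℝ)) (b := 1)).exists_bound_of_continuousOn
    continuous_Rfn.continuousOn
  refine ⟨max C 2, le_trans (by norm_num) (le_max_right C 2), fun t ht => ?_⟩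
  rcases le_or_gt t 1 with h | h
  · exact le_trans (hC t ⟨ht, h⟩) (le_max_left C 2)
  · have h1 : |Rfn t| = |Sfn t - Dval| := by rw [Rfn, abs_sub_comm]
    rw [h1]
    refine le_trans (Sfn_tail_bound (by linarith)) (le_trans ?_ (le_max_right C 2))
    rw [div_le_iff₀ (by linarith)]
    linarith

noncomputable def Phi (s : ℝ) : ℝ := ∫ t in Ioi (0:ℝ), Real.exp (-s * t) * Rfn t

lemma integrableOn_exp_Rfn {s : ℝ} (hs : 0 < s) {M : ℝ} (hM : ∀ t : ℝ, 0 ≤ t → |Rfn t| ≤ M) :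
    IntegrableOn (fun t => Real.exp (-s * t) * Rfn t) (Ioi (0:ℝ)) := by
  apply Integrable.mono' ((exp_neg_integrableOn_Ioi 0 hs).const_mul M)
  · exact ((Real.continuous_exp.comp (continuous_const.mul continuous_id)).mul
      continuous_Rfn).aestronglyMeasurable
  · filter_upwards [ae_restrict_mem measurableSet_Ioi] with t ht
    rw [norm_mul, Real.norm_eq_abs, Real.norm_eq_abs, Real.abs_exp, mul_comm]
    gcongr
    exact hM t (le_of_lt ht)

lemma lap_eq_sub {s : ℝ} (hs : 0 < s) {M : ℝ} (hM : ∀ t : ℝ, 0 ≤ t → |Rfn t| ≤ M) :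
    Lap s = Dval - s * Phi s := by
  set f : ℝ → ℝ := fun t => Real.exp (-s * t) * Rfn t with hf
  set f' : ℝ → ℝ := fun t => -s * (Real.exp (-s * t) * Rfn t) + -(Real.exp (-s * t) * sinc t)
    with hf'
  have hderiv : ∀ t ∈ Ici (0:ℝ), HasDerivAt f (f' t) t := by
    intro t _
    have := (hasDerivAt_exp_neg_mul s t).mul (hasDerivAt_Rfn t)
    refine this.congr_deriv (Eq.symm ?_)
    simp only [hf']
    ring
  have hint : IntegrableOn f' (Ioi (0:ℝ)) := by
    apply Integrable.add
    · exact (integrableOn_exp_Rfn hs hM).const_mul (-s)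
    · exact (integrableOn_exp_sinc hs).neg
  have hlim : Tendsto f atTop (𝓝 0) := by
    apply squeeze_zero_norm' (a := fun t => M * Real.exp (-s * t))
    · filter_upwards [Filter.Ici_mem_atTop (0:ℝ)] with t ht
      rw [hf]
      simp only
      rw [norm_mul, Real.norm_eq_abs, Real.norm_eq_abs, Real.abs_exp, mul_comm]
      gcongr
      exact hM t ht
    · simpa using (tendsto_exp_neg_mul hs).const_mul M
  have hFTC := integral_Ioi_of_hasDerivAt_of_tendsto' hderiv hint hlim
  have hsplit : ∫ t in Ioi (0:ℝ), f' t
      = -s * Phi s + -(Lap s) := by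
    rw [hf']
    have hi1 : IntegrableOn (fun t => -s * (Real.exp (-s * t) * Rfn t)) (Ioi (0:ℝ)) :=
      (integrableOn_exp_Rfn hs hM).const_mul (-s)
    have hi2 : IntegrableOn (fun t => -(Real.exp (-s * t) * sinc t)) (Ioi (0:ℝ)) :=
      (integrableOn_exp_sinc hs).neg
    rw [MeasureTheory.integral_add hi1 hi2, MeasureTheory.integral_neg,
      MeasureTheory.integral_const_mul]
    rfl
  rw [hsplit] at hFTC
  have hf0 : f 0 = Dval := by
    rw [hf]; simp [Rfn_zero]
  rw [hf0] at hFTC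
  have hs' : s ≠ 0 := hs.ne'
  nlinarith [hFTC]

lemma tendsto_sPhi {M : ℝ} (hM0 : 0 ≤ M) (hM : ∀ t : ℝ, 0 ≤ t → |Rfn t| ≤ M) :
    Tendsto (fun s => s * Phi s) (𝓝[>] (0:ℝ)) (𝓝 0) := by
  rw [NormedAddCommGroup.tendsto_nhds_zero]
  intro ε hε
  set T : ℝ := max 1 (4 / ε) with hT
  have hT1 : (1:ℝ) ≤ T := le_max_left _ _
  have hTpos : (0:ℝ) < T := lt_of_lt_of_le one_pos hT1
  have h2T : 2 / T ≤ ε / 2 := by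
    rw [div_le_div_iff₀ hTpos two_pos]
    have h4 : 4 / ε ≤ T := le_max_right _ _
    rw [div_le_iff₀ hε] at h4
    linarith
  set δ : ℝ := ε / (2 * (M * T + 1)) with hδ
  have hδpos : 0 < δ := by
    apply div_pos hε
    positivity
  filter_upwards [Ioo_mem_nhdsGT_of_mem (⟨le_refl (0:ℝ), hδpos⟩ : (0:ℝ) ∈ Ico (0:ℝ) δ)]
    with s hs
  obtain ⟨hs0, hsδ⟩ := hs
  have hint : IntegrableOn (fun t => Real.exp (-s * t) * Rfn t) (Ioi (0:ℝ)) :=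
    integrableOn_exp_Rfn hs0 hM
  have hsplit : Phi s = (∫ t in Ioc (0:ℝ) T, Real.exp (-s * t) * Rfn t)
      + ∫ t in Ioi T, Real.exp (-s * t) * Rfn t := by
    rw [Phi, ← Ioc_union_Ioi_eq_Ioi hTpos.le]
    exact MeasureTheory.setIntegral_union (Ioc_disjoint_Ioi le_rfl) measurableSet_Ioi
      (hint.mono_set (by rw [← Ioc_union_Ioi_eq_Ioi hTpos.le]; exact subset_union_left))
      (hint.mono_set (by rw [← Ioc_union_Ioi_eq_Ioi hTpos.le]; exact subset_union_right))
  have hvol : volume (Ioc (0:ℝ) T) < ⊤ := by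
    rw [Real.volume_Ioc]; exact ENNReal.ofReal_lt_top
  have hbound : ∀ t ∈ Ioc (0:ℝ) T, ‖Real.exp (-s * t) * Rfn t‖ ≤ M := by
    intro t ht
    rw [norm_mul, Real.norm_eq_abs, Real.norm_eq_abs, Real.abs_exp]
    calc Real.exp (-s * t) * |Rfn t| ≤ 1 * M := by
          apply mul_le_mul _ (hM t ht.1.le) (abs_nonneg _) one_pos.le
          rw [Real.exp_le_one_iff]
          have := ht.1
          nlinarith
      _ = M := one_mul M
  have hb1 : ‖∫ t in Ioc (0:ℝ) T, Real.exp (-s * t) * Rfn t‖ ≤ M * T := by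
    have h := MeasureTheory.norm_setIntegral_le_of_norm_le_const (μ := volume)
      (f := fun t => Real.exp (-s * t) * Rfn t) (C := M) hvol hbound
    rw [Real.volume_real_Ioc_of_le hTpos.le] at h
    calc ‖∫ t in Ioc (0:ℝ) T, Real.exp (-s * t) * Rfn t‖ ≤ M * (T - 0) := h
      _ = M * T := by ring
  have hb2 : ‖∫ t in Ioi T, Real.exp (-s * t) * Rfn t‖ ≤ (2 / T) * (1 / s) := by
    have step1 : ‖∫ t in Ioi T, Real.exp (-s * t) * Rfn t‖
        ≤ ∫ t in Ioi T, (2 / T) * Real.exp (-s * t) := by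
      apply norm_integral_le_of_norm_le ((exp_neg_integrableOn_Ioi T hs0).const_mul (2 / T))
      filter_upwards [ae_restrict_mem measurableSet_Ioi] with t ht
      have htT : T < t := ht
      have htpos : 0 < t := hTpos.trans htT
      rw [norm_mul, Real.norm_eq_abs, Real.norm_eq_abs, Real.abs_exp]
      have hRt : |Rfn t| ≤ 2 / T := by
        have h1 : |Rfn t| = |Sfn t - Dval| := by rw [Rfn, abs_sub_comm]
        rw [h1]
        refine le_trans (Sfn_tail_bound htpos) ?_
        gcongr
      calc Real.exp (-s * t) * |Rfn t| ≤ Real.exp (-s * t) * (2 / T) := by gcongr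
        _ = (2 / T) * Real.exp (-s * t) := by ring
    have hIle : ∫ t in Ioi T, Real.exp (-s * t) ≤ 1 / s := by
      rw [← integral_exp_neg_mul hs0]
      apply setIntegral_mono_set (exp_neg_integrableOn_Ioi 0 hs0)
      · filter_upwards with t using Real.exp_nonneg _
      · exact (Ioi_subset_Ioi hTpos.le).eventuallyLE
    have step2 : ∫ t in Ioi T, (2 / T) * Real.exp (-s * t) ≤ (2 / T) * (1 / s) := by
      rw [MeasureTheory.integral_const_mul]
      exact mul_le_mul_of_nonneg_left hIle (by positivity)
    exact le_trans step1 step2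
  have hPhi : ‖Phi s‖ ≤ M * T + (2 / T) * (1 / s) := by
    rw [hsplit]
    exact le_trans (norm_add_le _ _) (add_le_add hb1 hb2)
  have hfinal : ‖s * Phi s‖ ≤ s * (M * T) + 2 / T := by
    rw [norm_mul, Real.norm_eq_abs, Real.norm_eq_abs, abs_of_pos hs0]
    have h1 : s * |Phi s| ≤ s * (M * T + (2 / T) * (1 / s)) :=
      mul_le_mul_of_nonneg_left hPhi hs0.le
    have h2 : s * (M * T + (2 / T) * (1 / s)) = s * (M * T) + 2 / T := by
      field_simp
    linarith
  have hsMT : s * (M * T) < ε / 2 := by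
    calc s * (M * T) ≤ s * (M * T + 1) := by nlinarith
      _ < δ * (M * T + 1) := by
          apply mul_lt_mul_of_pos_right hsδ
          positivity
      _ = ε / 2 := by
          rw [hδ]
          field_simp
  linarith [hfinal, hsMT, h2T]

lemma Dval_eq_pi_div_two : Dval = π / 2 := by
  obtain ⟨M, hM0, hM⟩ := Rfn_bound
  have h1 : Tendsto Lap (𝓝[>] (0:ℝ)) (𝓝 Dval) := by
    have h2 : Tendsto (fun s => Dval - s * Phi s) (𝓝[>] (0:ℝ)) (𝓝 (Dval - 0)) :=
      tendsto_const_nhds.sub (tendsto_sPhi hM0 hM)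
    rw [sub_zero] at h2
    apply h2.congr'
    filter_upwards [self_mem_nhdsWithin] with s hs
    exact (lap_eq_sub hs hM).symm
  exact tendsto_nhds_unique h1 tendsto_Lap_zero_pi

lemma hasDerivAt_cos_mul (c x : ℝ) :
    HasDerivAt (fun x => Real.cos (c * x)) (-Real.sin (c * x) * c) x := by
  have h := (Real.hasDerivAt_cos (c * x)).comp x ((hasDerivAt_id x).const_mul c)
  have h2 : HasDerivAt (fun x : ℝ => Real.cos (c * x)) (-Real.sin (c * x) * (c * 1)) x := h
  convert h2 using 1
  ring

lemma c_sinc (c : ℝ) {x : ℝ} (hx : x ≠ 0) : c * sinc (c * x) = Real.sin (c * x) / x := by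
  rcases eq_or_ne c 0 with rfl | hc
  · simp
  · rw [sinc_eq (mul_ne_zero hc hx)]
    field_simp

lemma prod_to_sum (c d x : ℝ) :
    Real.cos (c * x) * (d * sinc (d * x))
      = ((c + d) * sinc ((c + d) * x) + (d - c) * sinc ((d - c) * x)) / 2 := by
  rcases eq_or_ne x 0 with rfl | hx
  · simp [sinc]; ring
  · rw [c_sinc d hx, c_sinc (c + d) hx, c_sinc (d - c) hx,
      show (c + d) * x = c * x + d * x by ring, show (d - c) * x = d * x - c * x by ring,
      Real.sin_add, Real.sin_sub]
    field_simp
    ring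

/-- For `0 < a ≤ b`, the improper integral `∫_0^∞ si(ax)·si(bx) dx` equals `π/(2b)`,
where `si x = -∫_x^∞ (sin t)/t dt`, extended by `si 0 = π/2` and `si(-x) = -si x - π`. -/
theorem stmt5 (si : ℝ → ℝ)
    (hsi : ∀ x : ℝ, 0 < x →
      Tendsto (fun L => ∫ t in x..L, Real.sin t / t) atTop (nhds (-(si x))))
    (hsi0 : si 0 = π / 2)
    (hneg : ∀ x : ℝ, 0 < x → si (-x) = -si x - π)
    (a b : ℝ) (ha : 0 < a) (hab : a ≤ b) :
    Tendsto (fun L => ∫ x in (0:ℝ)..L, si (a * x) * si (b * x)) atTop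
      (nhds (π / (2 * b))) := by
  have hb : 0 < b := lt_of_lt_of_le ha hab
  have ha' : a ≠ 0 := ha.ne'
  have hb' : b ≠ 0 := hb.ne'
  have hae0 : ∀ᵐ t : ℝ, t ≠ 0 := by
    rw [ae_iff]
    have he : {t : ℝ | ¬ t ≠ 0} = {0} := by ext t; simp
    rw [he]
    exact measure_singleton 0
  have si_eq : ∀ x : ℝ, 0 < x → si x = Sfn x - Dval := by
    intro x hx
    have h2 : ∀ L, (∫ t in x..L, Real.sin t / t) = Sfn L - Sfn x := by
      intro L
      rw [Sfn_sub x L]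
      apply intervalIntegral.integral_congr_ae
      filter_upwards [hae0] with t ht _
      exact (sinc_eq ht).symm
    have h1 : Tendsto (fun L => ∫ t in x..L, Real.sin t / t) atTop (𝓝 (Dval - Sfn x)) := by
      apply (tendsto_Sfn.sub_const (Sfn x)).congr
      intro L
      exact (h2 L).symm
    have := tendsto_nhds_unique (hsi x hx) h1
    linarith
  set f : ℝ → ℝ := fun x => Sfn (a * x) - Dval with hfdef
  set g : ℝ → ℝ := fun x => Sfn (b * x) - Dval with hgdef
  set Ψ : ℝ → ℝ := fun x => x * (f x * g x) + Real.cos (a * x) / a * g x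
      + Real.cos (b * x) / b * f x
      - 1 / (2 * a) * (Sfn ((a + b) * x) + Sfn ((b - a) * x))
      - 1 / (2 * b) * (Sfn ((a + b) * x) + Sfn ((a - b) * x)) with hΨdef
  have hΨ : ∀ x : ℝ, HasDerivAt Ψ (f x * g x) x := by
    intro x
    have hfd : HasDerivAt f (a * sinc (a * x)) x := (hasDerivAt_Sfn_comp a x).sub_const Dval
    have hgd : HasDerivAt g (b * sinc (b * x)) x := (hasDerivAt_Sfn_comp b x).sub_const Dval
    have p1 : HasDerivAt (fun x => x * (f x * g x))
        (1 * (f x * g x) + x * (a * sinc (a * x) * g x + f x * (b * sinc (b * x)))) x :=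
      (hasDerivAt_id x).mul (hfd.mul hgd)
    have p2 : HasDerivAt (fun x => Real.cos (a * x) / a * g x)
        ((-Real.sin (a * x) * a / a) * g x + (Real.cos (a * x) / a) * (b * sinc (b * x))) x :=
      ((hasDerivAt_cos_mul a x).div_const a).mul hgd
    have p3 : HasDerivAt (fun x => Real.cos (b * x) / b * f x)
        ((-Real.sin (b * x) * b / b) * f x + (Real.cos (b * x) / b) * (a * sinc (a * x))) x :=
      ((hasDerivAt_cos_mul b x).div_const b).mul hfd
    have p4 : HasDerivAt (fun x => 1 / (2 * a) * (Sfn ((a + b) * x) + Sfn ((b - a) * x)))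
        (1 / (2 * a) * ((a + b) * sinc ((a + b) * x) + (b - a) * sinc ((b - a) * x))) x :=
      ((hasDerivAt_Sfn_comp (a + b) x).add (hasDerivAt_Sfn_comp (b - a) x)).const_mul (1 / (2 * a))
    have p5 : HasDerivAt (fun x => 1 / (2 * b) * (Sfn ((a + b) * x) + Sfn ((a - b) * x)))
        (1 / (2 * b) * ((a + b) * sinc ((a + b) * x) + (a - b) * sinc ((a - b) * x))) x :=
      ((hasDerivAt_Sfn_comp (a + b) x).add (hasDerivAt_Sfn_comp (a - b) x)).const_mul (1 / (2 * b))
    have ptot := (((p1.add p2).add p3).sub p4).sub p5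
    refine ptot.congr_deriv (Eq.symm ?_)
    have e1 : x * (a * sinc (a * x)) = Real.sin (a * x) := by
      rw [← mul_sinc (a * x)]; ring
    have e2 : x * (b * sinc (b * x)) = Real.sin (b * x) := by
      rw [← mul_sinc (b * x)]; ring
    have e3 := prod_to_sum a b x
    have e4 := prod_to_sum b a x
    rw [add_comm b a] at e4
    linear_combination (-(g x)) * e1 + (-(f x)) * e2 + (-(1/a)) * e3 + (-(1/b)) * e4
      + (Real.sin (a * x) * g x) * (mul_inv_cancel₀ ha')
      + (Real.sin (b * x) * f x) * (mul_inv_cancel₀ hb')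
  -- tail bounds
  have hfb : ∀ L : ℝ, 0 < L → |f L| ≤ 2 / (a * L) := by
    intro L hL
    exact Sfn_tail_bound (by positivity)
  have hgb : ∀ L : ℝ, 0 < L → |g L| ≤ 2 / (b * L) := by
    intro L hL
    exact Sfn_tail_bound (by positivity)
  have hinv : Tendsto (fun L : ℝ => L⁻¹) atTop (𝓝 0) := tendsto_inv_atTop_zero
  have t1 : Tendsto (fun L => L * (f L * g L)) atTop (𝓝 0) := by
    apply squeeze_zero_norm' (a := fun L => 4 / (a * b) * L⁻¹)
    · filter_upwards [Filter.Ioi_mem_atTop (0:ℝ)] with L hL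
      have hL : (0:ℝ) < L := hL
      rw [Real.norm_eq_abs, abs_mul, abs_mul, abs_of_pos hL]
      calc L * (|f L| * |g L|) ≤ L * (2 / (a * L) * (2 / (b * L))) := by
            apply mul_le_mul_of_nonneg_left _ hL.le
            exact mul_le_mul (hfb L hL) (hgb L hL) (abs_nonneg _) (by positivity)
        _ = 4 / (a * b) * L⁻¹ := by field_simp; ring
    · simpa using hinv.const_mul (4 / (a * b))
  have t2 : Tendsto (fun L => Real.cos (a * L) / a * g L) atTop (𝓝 0) := by
    apply squeeze_zero_norm' (a := fun L => 2 / (a * b) * L⁻¹)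
    · filter_upwards [Filter.Ioi_mem_atTop (0:ℝ)] with L hL
      have hL : (0:ℝ) < L := hL
      rw [Real.norm_eq_abs, abs_mul, abs_div, abs_of_pos ha]
      calc |Real.cos (a * L)| / a * |g L| ≤ 1 / a * (2 / (b * L)) := by
            apply mul_le_mul _ (hgb L hL) (abs_nonneg _) (by positivity)
            gcongr
            exact Real.abs_cos_le_one _
        _ = 2 / (a * b) * L⁻¹ := by field_simp
    · simpa using hinv.const_mul (2 / (a * b))
  have t3 : Tendsto (fun L => Real.cos (b * L) / b * f L) atTop (𝓝 0) := by
    apply squeeze_zero_norm' (a := fun L => 2 / (a * b) * L⁻¹)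
    · filter_upwards [Filter.Ioi_mem_atTop (0:ℝ)] with L hL
      have hL : (0:ℝ) < L := hL
      rw [Real.norm_eq_abs, abs_mul, abs_div, abs_of_pos hb]
      calc |Real.cos (b * L)| / b * |f L| ≤ 1 / b * (2 / (a * L)) := by
            apply mul_le_mul _ (hfb L hL) (abs_nonneg _) (by positivity)
            gcongr
            exact Real.abs_cos_le_one _
        _ = 2 / (a * b) * L⁻¹ := by field_simp
    · simpa using hinv.const_mul (2 / (a * b))
  have t4 : Tendsto (fun L => Sfn ((a + b) * L)) atTop (𝓝 Dval) :=
    tendsto_Sfn.comp (Tendsto.const_mul_atTop (by positivity) tendsto_id)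
  have t5 : Tendsto (fun L => (b - a) / (2 * a * b) * Sfn ((b - a) * L)) atTop
      (𝓝 ((b - a) / (2 * a * b) * Dval)) := by
    rcases eq_or_lt_of_le hab with h | h
    · subst h
      simp [Sfn_zero]
    · exact (tendsto_Sfn.comp (Tendsto.const_mul_atTop (by linarith) tendsto_id)).const_mul _
  have hΨlim : Tendsto Ψ atTop (𝓝 (-Dval / a)) := by
    have htot := ((((t1.add t2).add t3).sub (t4.const_mul (1 / (2 * a) + 1 / (2 * b)))).sub t5)
    have hval : 0 + 0 + 0 - (1 / (2 * a) + 1 / (2 * b)) * Dval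
        - (b - a) / (2 * a * b) * Dval = -Dval / a := by
      field_simp
      ring
    rw [hval] at htot
    apply htot.congr
    intro L
    simp only [hΨdef]
    rw [show (a - b) * L = -((b - a) * L) by ring, Sfn_neg]
    field_simp
    ring
  have hΨ0 : Ψ 0 = -Dval / a - Dval / b := by
    simp only [hΨdef, hfdef, hgdef]
    simp [Sfn_zero]
    field_simp
    ring
  have hcontfg : Continuous (fun x => f x * g x) := by
    apply Continuous.mul
    · exact (continuous_Sfn.comp (continuous_const.mul continuous_id)).sub continuous_const
    · exact (continuous_Sfn.comp (continuous_const.mul continuous_id)).sub continuous_const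
  have hI : ∀ᶠ L in atTop, (∫ x in (0:ℝ)..L, si (a * x) * si (b * x)) = Ψ L - Ψ 0 := by
    filter_upwards [Filter.Ioi_mem_atTop (0:ℝ)] with L hL
    have hL : (0:ℝ) < L := hL
    have hcong : (∫ x in (0:ℝ)..L, si (a * x) * si (b * x)) = ∫ x in (0:ℝ)..L, f x * g x := by
      apply intervalIntegral.integral_congr_ae
      apply Eventually.of_forall
      intro t ht
      rw [uIoc_of_le hL.le] at ht
      have ht0 : 0 < t := ht.1
      rw [si_eq (a * t) (by positivity), si_eq (b * t) (by positivity)]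
    rw [hcong]
    exact intervalIntegral.integral_eq_sub_of_hasDerivAt (fun t _ => hΨ t)
      (hcontfg.intervalIntegrable 0 L)
  have hfinal : Tendsto (fun L => Ψ L - Ψ 0) atTop (𝓝 (-Dval / a - Ψ 0)) :=
    hΨlim.sub_const (Ψ 0)
  have hval2 : -Dval / a - Ψ 0 = π / (2 * b) := by
    rw [hΨ0, Dval_eq_pi_div_two]
    field_simp
    ring
  rw [← hval2]
  exact hfinal.congr' (by filter_upwards [hI] with L h using h.symm)
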